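/- Let λ : ℤ₊ → ℝ satisfy (UB). The contour-integral kernel is the transition function of the pure-birth chain: for all x,y ∈ ℤ₊ one has e^{0·L}(x,y) = 1(x = y), the map t ↦ e^{tL}(x,y) is differentiable on [0,∞), and for all t ≥ 0 it satisfies the Kolmogorov backward equation (d/dt) e^{tL}(x,y) = λ(x) ( e^{tL}(x+1,y) − e^{tL}(x,y) ). -/

import Mathlib

open Complex MeasureTheory Finset
open scoped Real ComplexOrder

/-- ψ_x(w) = ∏_{k=0}^{x} λ(k)/(λ(k)−w). -/
noncomputable def psiF (lam : ℕ → ℝ) (x : ℕ) (w : ℂ) : ℂ :=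
  ∏ k ∈ Finset.range (x + 1), (lam k : ℂ) / ((lam k : ℂ) - w)

/-- p_x(w) = ∏_{k=0}^{x−1} (λ(k)−w)/λ(k). -/
noncomputable def pF (lam : ℕ → ℝ) (x : ℕ) (w : ℂ) : ℂ :=
  ∏ k ∈ Finset.range x, (((lam k : ℂ) - w) / (lam k : ℂ))

/-- e^{tL}(x,y) := −(1/λ(y))·(1/(2πi)) ∮_{|w|=R} ψ_y(w) p_x(w) e^{−tw} dw,
the contour being the counterclockwise circle of radius R centred at 0. -/
noncomputable def eL (lam : ℕ → ℝ) (R t : ℝ) (x y : ℕ) : ℂ :=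
  -(1 / (lam y : ℂ)) * ((2 * (Real.pi : ℂ) * Complex.I)⁻¹ *
    ∮ w in C(0, R), psiF lam y w * pF lam x w * Complex.exp (-(t : ℂ) * w))

section helpers

open Metric

variable {lam : ℕ → ℝ} {s M : ℝ}

lemma lamC_ne (hs : 0 < s) (hlb : ∀ x, s ≤ lam x) (k : ℕ) : (lam k : ℂ) ≠ 0 := by
  exact_mod_cast (hs.trans_le (hlb k)).ne'

lemma norm_lamC_le (hs : 0 < s) (hlb : ∀ x, s ≤ lam x) (hub : ∀ x, lam x ≤ M) (k : ℕ) :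
    ‖(lam k : ℂ)‖ ≤ M := by
  rw [Complex.norm_real, Real.norm_eq_abs, abs_of_pos (hs.trans_le (hlb k))]
  exact hub k

lemma norm_sub_lam (hs : 0 < s) (hlb : ∀ x, s ≤ lam x) (hub : ∀ x, lam x ≤ M)
    {r : ℝ} (hr : M < r) {w : ℂ} (hw : ‖w‖ = r) (k : ℕ) :
    r - M ≤ ‖(lam k : ℂ) - w‖ := by
  have h1 : ‖w‖ - ‖(lam k : ℂ)‖ ≤ ‖(lam k : ℂ) - w‖ := by
    rw [norm_sub_rev]; exact norm_sub_norm_le _ _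
  have := norm_lamC_le hs hlb hub (M := M) k
  linarith [hw ▸ h1]

lemma sub_ne' (hs : 0 < s) (hlb : ∀ x, s ≤ lam x) (hub : ∀ x, lam x ≤ M)
    {w : ℂ} (hw : M < ‖w‖) (k : ℕ) :
    (lam k : ℂ) - w ≠ 0 := by
  have := norm_sub_lam hs hlb hub hw rfl k
  intro h; rw [h, norm_zero] at this; linarith

/-- The integral over `C(0,R)` of `∏_{k∈Ico a b} λk/(λk - w)` vanishes when `b - a ≥ 2`. -/
lemma integral_Ico_zero (hs : 0 < s) (hlb : ∀ x, s ≤ lam x) (hub : ∀ x, lam x ≤ M)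
    {R : ℝ} (hR : M < R) {a b : ℕ} (hab : a + 2 ≤ b) :
    (∮ w in C(0, R), ∏ k ∈ Finset.Ico a b, (lam k : ℂ) / ((lam k : ℂ) - w)) = 0 := by
  have hM : 0 < M := lt_of_lt_of_le (hs.trans_le (hlb 0)) (hub 0)
  have hR0 : 0 < R := hM.trans hR
  set f : ℂ → ℂ := fun w => ∏ k ∈ Finset.Ico a b, (lam k : ℂ) / ((lam k : ℂ) - w) with hf
  -- independence of radius
  have hconst : ∀ u : ℝ, R ≤ u → (∮ w in C(0, u), f w) = ∮ w in C(0, R), f w := by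
    intro u hu
    apply circleIntegral_eq_of_differentiable_on_annulus_off_countable hR0 hu
      (Set.countable_empty)
    · apply continuousOn_finset_prod
      intro k _
      apply continuousOn_const.div ((continuous_const.sub continuous_id).continuousOn)
      intro w hw
      rcases hw with ⟨_, hw2⟩
      simp only [mem_ball, Complex.dist_eq, sub_zero, not_lt] at hw2
      exact sub_ne' hs hlb hub (lt_of_lt_of_le hR hw2) k
    · intro z hz
      rcases hz.1 with ⟨_, hz2⟩
      simp only [mem_closedBall, Complex.dist_eq, sub_zero, not_le] at hz2
      apply DifferentiableAt.fun_finsetProd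
      intro k _
      exact (differentiableAt_const _).div
        ((differentiableAt_const _).sub differentiableAt_id)
        (sub_ne' hs hlb hub (hR.trans hz2) k)
  -- bound for large radius
  have hbound : ∀ u : ℝ, R ≤ u → 2 * M ≤ u →
      ‖∮ w in C(0, R), f w‖ ≤ 2 * π * (4 * M ^ 2) / u := by
    intro u hu h2M
    have hu0 : 0 < u := hR0.trans_le hu
    have huM : 0 < u - M := by linarith [hR.trans_le hu]
    rw [← hconst u hu]
    have key : ∀ w ∈ sphere (0:ℂ) u, ‖f w‖ ≤ (M / (u - M)) ^ 2 := by
      intro w hw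
      have hwn : ‖w‖ = u := by simpa [Complex.dist_eq] using hw
      have hfac : ∀ k ∈ Finset.Ico a b, ‖(lam k : ℂ) / ((lam k : ℂ) - w)‖ ≤ M / (u - M) := by
        intro k _
        rw [norm_div]
        apply div_le_div₀ (le_of_lt hM) (norm_lamC_le hs hlb hub k) huM
        exact norm_sub_lam hs hlb hub (hR.trans_le hu) hwn k
      calc ‖f w‖ = ∏ k ∈ Finset.Ico a b, ‖(lam k : ℂ) / ((lam k : ℂ) - w)‖ := by
            rw [hf]; exact norm_prod _ _
        _ ≤ ∏ _k ∈ Finset.Ico a b, (M / (u - M)) :=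
            Finset.prod_le_prod (fun k _ => norm_nonneg _) hfac
        _ = (M / (u - M)) ^ (b - a) := by rw [Finset.prod_const, Nat.card_Ico]
        _ ≤ (M / (u - M)) ^ 2 := by
            apply pow_le_pow_of_le_one (by positivity)
            · rw [div_le_one huM]; linarith
            · omega
    calc ‖∮ w in C(0, u), f w‖ ≤ 2 * π * u * ((M / (u - M)) ^ 2) :=
          circleIntegral.norm_integral_le_of_norm_le_const hu0.le key
      _ ≤ 2 * π * (4 * M ^ 2) / u := by
          rw [div_pow]
          have h1 : u / 2 ≤ u - M := by linarith
          have h2 : (u / 2) ^ 2 ≤ (u - M) ^ 2 := by nlinarith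
          have h3 : M ^ 2 / (u - M) ^ 2 ≤ M ^ 2 / (u / 2) ^ 2 :=
            div_le_div_of_nonneg_left (by positivity) (by positivity) h2
          have h4 : 2 * π * u * (M ^ 2 / (u - M) ^ 2) ≤ 2 * π * u * (M ^ 2 / (u / 2) ^ 2) := by
            apply mul_le_mul_of_nonneg_left h3 (by positivity)
          have h5 : 2 * π * u * (M ^ 2 / (u / 2) ^ 2) = 2 * π * (4 * M ^ 2) / u := by
            field_simp; ring
          linarith
  -- conclude
  have hlim : Filter.Tendsto (fun u : ℝ => 2 * π * (4 * M ^ 2) / u)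
      Filter.atTop (nhds 0) :=
    Filter.Tendsto.div_atTop tendsto_const_nhds Filter.tendsto_id
  have hle : ‖∮ w in C(0, R), f w‖ ≤ 0 := by
    apply ge_of_tendsto hlim
    filter_upwards [Filter.eventually_ge_atTop (max R (2 * M))] with u hu
    exact hbound u (le_trans (le_max_left _ _) hu) (le_trans (le_max_right _ _) hu)
  simpa using norm_le_zero_iff.mp hle

lemma pF_cancel (hs : 0 < s) (hlb : ∀ x, s ≤ lam x)
    {w : ℂ} (hw : ∀ k, (lam k : ℂ) - w ≠ 0) (n : ℕ) :
    (∏ k ∈ Finset.range n, (lam k : ℂ) / ((lam k : ℂ) - w)) * pF lam n w = 1 := by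
  rw [pF, ← Finset.prod_mul_distrib, Finset.prod_eq_one]
  intro k _
  field_simp [lamC_ne hs hlb k, hw k]

lemma psi_p_eq_of_le (hs : 0 < s) (hlb : ∀ x, s ≤ lam x)
    {w : ℂ} (hw : ∀ k, (lam k : ℂ) - w ≠ 0) {x y : ℕ} (hxy : x ≤ y) :
    psiF lam y w * pF lam x w
      = ∏ k ∈ Finset.Ico x (y + 1), (lam k : ℂ) / ((lam k : ℂ) - w) := by
  have h : x ≤ y + 1 := hxy.trans (Nat.le_succ y)
  rw [psiF, ← Finset.prod_range_mul_prod_Ico _ h, mul_comm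
    (∏ k ∈ Finset.range x, (lam k : ℂ) / ((lam k : ℂ) - w)) _, mul_assoc]
  rw [pF_cancel hs hlb hw x, mul_one]

lemma psi_p_eq_of_gt (hs : 0 < s) (hlb : ∀ x, s ≤ lam x)
    {w : ℂ} (hw : ∀ k, (lam k : ℂ) - w ≠ 0) {x y : ℕ} (hxy : y < x) :
    psiF lam y w * pF lam x w
      = ∏ k ∈ Finset.Ico (y + 1) x, (((lam k : ℂ) - w) / (lam k : ℂ)) := by
  have h : y + 1 ≤ x := hxy
  rw [pF, ← Finset.prod_range_mul_prod_Ico _ h, ← mul_assoc]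
  rw [show (∏ k ∈ Finset.range (y+1), (((lam k : ℂ) - w) / (lam k : ℂ))) = pF lam (y+1) w from
    rfl, psiF, pF_cancel hs hlb hw (y+1), one_mul]

lemma integral_psi_p (hs : 0 < s) (hlb : ∀ x, s ≤ lam x) (hub : ∀ x, lam x ≤ M)
    {R : ℝ} (hR : M < R) (x y : ℕ) :
    (∮ w in C(0, R), psiF lam y w * pF lam x w)
      = if x = y then -(lam y : ℂ) * (2 * π * I) else 0 := by
  have hM : 0 < M := lt_of_lt_of_le (hs.trans_le (hlb 0)) (hub 0)
  have hR0 : 0 < R := hM.trans hR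
  have hsub : ∀ w ∈ sphere (0:ℂ) R, ∀ k, (lam k : ℂ) - w ≠ 0 := by
    intro w hw k
    have hwn : ‖w‖ = R := by simpa [Complex.dist_eq] using hw
    exact sub_ne' hs hlb hub (hwn ▸ hR) k
  rcases lt_trichotomy x y with hxy | rfl | hxy
  · rw [if_neg hxy.ne]
    rw [circleIntegral.integral_congr hR0.le (fun w hw => psi_p_eq_of_le hs hlb (hsub w hw)
      hxy.le)]
    exact integral_Ico_zero hs hlb hub hR (by omega)
  · rw [if_pos rfl]
    have heq : Set.EqOn (fun w => psiF lam x w * pF lam x w)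
        (fun w => (-(lam x : ℂ)) • (w - (lam x : ℂ))⁻¹) (sphere (0:ℂ) R) := by
      intro w hw
      have h1 := psi_p_eq_of_le hs hlb (hsub w hw) (le_refl x)
      simp only [h1]
      rw [show Finset.Ico x (x+1) = {x} by rw [Nat.Ico_succ_singleton], Finset.prod_singleton]
      have h2 : w - (lam x : ℂ) ≠ 0 := fun h => hsub w hw x (by
        rw [sub_eq_zero] at h ⊢; exact h.symm)
      rw [smul_eq_mul]
      field_simp [hsub w hw x, h2]
      ring
    rw [circleIntegral.integral_congr hR0.le heq, circleIntegral.integral_smul]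
    rw [circleIntegral.integral_sub_inv_of_mem_ball (by
      simpa [Complex.dist_eq] using lt_of_le_of_lt (norm_lamC_le hs hlb hub x) hR)]
    simp [smul_eq_mul]
  · rw [if_neg hxy.ne']
    rw [circleIntegral.integral_congr hR0.le (fun w hw => psi_p_eq_of_gt hs hlb (hsub w hw) hxy)]
    apply circleIntegral_eq_zero_of_differentiable_on_off_countable hR0.le Set.countable_empty
    · apply Continuous.continuousOn
      apply continuous_finset_prod
      intro k _
      exact ((continuous_const.sub continuous_id).div_const _)
    · intro z _
      apply DifferentiableAt.fun_finsetProd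
      intro k _
      exact ((differentiableAt_const _).sub differentiableAt_id).div_const _

set_option maxHeartbeats 1000000 in
lemma hasDerivAt_circleIntegral {R : ℝ} (hR0 : 0 < R) (g : ℂ → ℂ)
    (hg : ContinuousOn g (sphere (0:ℂ) R)) (t : ℝ) :
    HasDerivAt (fun τ : ℝ => ∮ w in C(0, R), g w * Complex.exp (-(τ:ℂ) * w))
      (∮ w in C(0, R), g w * (-w * Complex.exp (-(t:ℂ) * w))) t := by
  obtain ⟨C, hC⟩ := (isCompact_sphere (0:ℂ) R).exists_bound_of_continuousOn hg
  set c : ℝ → ℂ := circleMap 0 R with hc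
  have hcc : Continuous c := continuous_circleMap 0 R
  have hmem : ∀ θ, c θ ∈ sphere (0:ℂ) R := fun θ => circleMap_mem_sphere _ hR0.le θ
  have hgc : Continuous fun θ => g (c θ) := hg.comp_continuous hcc hmem
  have hnorm : ∀ θ, ‖c θ‖ = R := fun θ => by
    simpa [Complex.dist_eq] using hmem θ
  have hexpc : ∀ τ : ℝ, Continuous fun θ => Complex.exp (-(τ:ℂ) * c θ) :=
    fun τ => Complex.continuous_exp.comp ((continuous_const.mul hcc))
  simp only [circleIntegral, deriv_circleMap, smul_eq_mul]
  refine (intervalIntegral.hasDerivAt_integral_of_dominated_loc_of_deriv_le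
    (𝕜 := ℝ) (μ := volume) (a := 0) (b := 2 * π) (x₀ := t) (s := Metric.ball t 1)
    (F := fun τ θ => (c θ * I) * (g (c θ) * Complex.exp (-(τ:ℂ) * c θ)))
    (F' := fun τ θ => (c θ * I) * (g (c θ) * (-(c θ) * Complex.exp (-(τ:ℂ) * c θ))))
    (bound := fun _ => R * (|C| * (R * Real.exp ((|t| + 1) * R))))
    (Metric.ball_mem_nhds t one_pos) ?_ ?_ ?_ ?_ ?_ ?_).2
  · exact Filter.Eventually.of_forall fun (τ : ℝ) =>
      (((hcc.mul continuous_const).mul (hgc.mul (hexpc τ)))).aestronglyMeasurable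
  · exact (((hcc.mul continuous_const).mul (hgc.mul (hexpc t))).intervalIntegrable _ _)
  · exact (((hcc.mul continuous_const).mul
      (hgc.mul (hcc.neg.mul (hexpc t)))).aestronglyMeasurable)
  · apply ae_of_all
    intro θ _ τ hτ
    have hτ1 : |τ| ≤ |t| + 1 := by
      have := abs_sub_abs_le_abs_sub τ t
      have h2 : |τ - t| ≤ 1 := le_of_lt (by simpa [Real.dist_eq] using hτ)
      linarith
    have hre : (-(τ:ℂ) * c θ).re ≤ (|t| + 1) * R := by
      have h1 : (-(τ:ℂ) * c θ).re = -τ * (c θ).re := by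
        simp [Complex.mul_re, hc, circleMap]
      rw [h1]
      have h2 : |(-τ) * (c θ).re| ≤ |τ| * R := by
        rw [abs_mul, abs_neg]
        apply mul_le_mul_of_nonneg_left _ (abs_nonneg τ)
        calc |(c θ).re| ≤ ‖c θ‖ := Complex.abs_re_le_norm _
          _ = R := hnorm θ
      calc (-τ) * (c θ).re ≤ |(-τ) * (c θ).re| := le_abs_self _
        _ ≤ |τ| * R := h2
        _ ≤ (|t| + 1) * R := mul_le_mul_of_nonneg_right hτ1 hR0.le
    have hgb : ‖g (c θ)‖ ≤ |C| := (hC _ (hmem θ)).trans (le_abs_self C)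
    have hexpb : ‖Complex.exp (-(τ:ℂ) * c θ)‖ ≤ Real.exp ((|t| + 1) * R) := by
      rw [Complex.norm_exp]; exact Real.exp_le_exp.2 hre
    calc ‖c θ * I * (g (c θ) * (-c θ * Complex.exp (-(τ:ℂ) * c θ)))‖
        = R * (‖g (c θ)‖ * (R * ‖Complex.exp (-(τ:ℂ) * c θ)‖)) := by
          simp only [norm_mul, norm_neg, Complex.norm_I, mul_one, hnorm θ]
      _ ≤ R * (|C| * (R * Real.exp ((|t| + 1) * R))) := by gcongr
  · exact intervalIntegrable_const
  · apply ae_of_all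
    intro θ _ τ hτ
    have hexp : HasDerivAt (fun σ : ℝ => Complex.exp (-(σ:ℂ) * c θ))
        (-c θ * Complex.exp (-(τ:ℂ) * c θ)) τ := by
      have h1 : HasDerivAt (fun z : ℂ => Complex.exp (-z * c θ))
          (Complex.exp (-(τ:ℂ) * c θ) * (-1 * c θ)) (τ:ℂ) :=
        ((hasDerivAt_id (τ:ℂ)).neg.mul_const (c θ)).cexp
      have h2 := h1.comp_ofReal
      convert h2 using 1
      ring
    exact ((hexp.const_mul (g (c θ))).const_mul (c θ * I))

end helpers


/-- e^{0·L}(x,y) = 1(x=y), t ↦ e^{tL}(x,y) is differentiable on [0,∞) and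
satisfies the Kolmogorov backward equation
(d/dt) e^{tL}(x,y) = λ(x) (e^{tL}(x+1,y) − e^{tL}(x,y)). -/
theorem stmt_2 (lam : ℕ → ℝ) (s M : ℝ) (hs : 0 < s)
    (hlb : ∀ x, s ≤ lam x) (hub : ∀ x, lam x ≤ M)
    (R : ℝ) (hR : M < R) (x y : ℕ) :
    (eL lam R 0 x y = if x = y then 1 else 0) ∧
    ∀ t : ℝ, 0 ≤ t →
      HasDerivWithinAt (fun τ : ℝ => eL lam R τ x y)
        ((lam x : ℂ) * (eL lam R t (x + 1) y - eL lam R t x y)) (Set.Ici 0) t := by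
  have hM : 0 < M := lt_of_lt_of_le (hs.trans_le (hlb 0)) (hub 0)
  have hR0 : 0 < R := hM.trans hR
  have hsub : ∀ w ∈ Metric.sphere (0:ℂ) R, ∀ k, (lam k : ℂ) - w ≠ 0 := by
    intro w hw k
    have hwn : ‖w‖ = R := by simpa [Complex.dist_eq] using hw
    exact sub_ne' hs hlb hub (hwn ▸ hR) k
  have hgcont : ∀ z : ℕ,
      ContinuousOn (fun w => psiF lam y w * pF lam z w) (Metric.sphere (0:ℂ) R) := by
    intro z
    apply ContinuousOn.mul
    · apply continuousOn_finset_prod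
      intro k _
      exact continuousOn_const.div ((continuous_const.sub continuous_id).continuousOn)
        (fun w hw => hsub w hw k)
    · apply Continuous.continuousOn
      apply continuous_finset_prod
      intro k _
      exact (continuous_const.sub continuous_id).div_const _
  constructor
  · -- value at 0
    simp only [eL, Complex.ofReal_zero, neg_zero, zero_mul, Complex.exp_zero, mul_one]
    rw [integral_psi_p hs hlb hub hR x y]
    by_cases h : x = y
    · rw [if_pos h, if_pos h]
      field_simp [lamC_ne hs hlb y, Real.pi_ne_zero, Complex.I_ne_zero]
    · rw [if_neg h, if_neg h]
      simp
  · -- derivative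
    intro t _
    have main := hasDerivAt_circleIntegral hR0 (fun w => psiF lam y w * pF lam x w) (hgcont x) t
    have hd := (main.const_mul ((2 * (π:ℂ) * I)⁻¹)).const_mul (-(1/(lam y:ℂ)))
    have hval : (lam x : ℂ) * (eL lam R t (x + 1) y - eL lam R t x y)
        = -(1/(lam y:ℂ)) * ((2 * (π:ℂ) * I)⁻¹ *
          ∮ w in C(0, R), (fun w => psiF lam y w * pF lam x w) w
            * (-w * Complex.exp (-(t:ℂ) * w))) := by
      have hInt : ∀ z : ℕ, CircleIntegrable
          (fun w => psiF lam y w * pF lam z w * Complex.exp (-(t:ℂ) * w)) 0 R := by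
        intro z
        exact ((hgcont z).mul
          (Complex.continuous_exp.comp (continuous_const.mul continuous_id)).continuousOn
          ).circleIntegrable hR0.le
      have h1 : (∮ w in C(0, R), psiF lam y w * pF lam (x+1) w * Complex.exp (-(t:ℂ) * w))
            - (∮ w in C(0, R), psiF lam y w * pF lam x w * Complex.exp (-(t:ℂ) * w))
          = ∮ w in C(0, R), (psiF lam y w * pF lam (x+1) w * Complex.exp (-(t:ℂ) * w)
            - psiF lam y w * pF lam x w * Complex.exp (-(t:ℂ) * w)) :=
        (circleIntegral.integral_sub (hInt (x+1)) (hInt x)).symm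
      have h2 : (lam x : ℂ) • (∮ w in C(0, R),
            (psiF lam y w * pF lam (x+1) w * Complex.exp (-(t:ℂ) * w)
            - psiF lam y w * pF lam x w * Complex.exp (-(t:ℂ) * w)))
          = ∮ w in C(0, R), (lam x : ℂ) •
            (psiF lam y w * pF lam (x+1) w * Complex.exp (-(t:ℂ) * w)
            - psiF lam y w * pF lam x w * Complex.exp (-(t:ℂ) * w)) :=
        (circleIntegral.integral_smul _ _ _ _).symm
      have h3 : (fun w => (lam x : ℂ) •
            (psiF lam y w * pF lam (x+1) w * Complex.exp (-(t:ℂ) * w)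
            - psiF lam y w * pF lam x w * Complex.exp (-(t:ℂ) * w)))
          = fun w => (psiF lam y w * pF lam x w) * (-w * Complex.exp (-(t:ℂ) * w)) := by
        funext w
        have hp : pF lam (x+1) w = pF lam x w * (((lam x : ℂ) - w) / (lam x : ℂ)) := by
          rw [pF, pF, Finset.prod_range_succ]
        rw [smul_eq_mul, hp]
        field_simp [lamC_ne hs hlb x]
        ring
      simp only [eL]
      calc (lam x:ℂ) * (-(1 / (lam y:ℂ)) * ((2 * (π:ℂ) * I)⁻¹ *
              ∮ w in C(0, R), psiF lam y w * pF lam (x+1) w * Complex.exp (-(t:ℂ) * w))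
            - -(1 / (lam y:ℂ)) * ((2 * (π:ℂ) * I)⁻¹ *
              ∮ w in C(0, R), psiF lam y w * pF lam x w * Complex.exp (-(t:ℂ) * w)))
          = -(1 / (lam y:ℂ)) * ((2 * (π:ℂ) * I)⁻¹ * ((lam x : ℂ) •
            (((∮ w in C(0, R), psiF lam y w * pF lam (x+1) w * Complex.exp (-(t:ℂ) * w))
            - ∮ w in C(0, R), psiF lam y w * pF lam x w * Complex.exp (-(t:ℂ) * w))))) := by
            simp only [smul_eq_mul]; ring
        _ = -(1/(lam y:ℂ)) * ((2 * (π:ℂ) * I)⁻¹ *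
            ∮ w in C(0, R), (fun w => psiF lam y w * pF lam x w) w
              * (-w * Complex.exp (-(t:ℂ) * w))) := by
            rw [h1, h2, h3]
    rw [hval]
    exact hd.hasDerivWithinAt
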